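/- The set {x_{∅,k} : k = 1,…,n} and the set {x_{{1,…,n}∖{k}, k} : k = 1,…,n} are both sufficient sets in Q_n for the polynomial 𝒫(t): the du-envelope of each of these sets contains a defining set of pseudo-roots of 𝒫(t). -/

import Mathlib

open Polynomial

/-- Generators of the algebra `Qₙ`: pairs `(A, i)` with `A ⊆ {1,…,n}`, `i ∉ A`. -/
def QGen (n : ℕ) : Type := {p : Finset (Fin n) × Fin n // p.2 ∉ p.1}

theorem notmem_insert {n : ℕ} {A : Finset (Fin n)} {i j : Fin n}
    (hj : j ∉ A) (hij : j ≠ i) : j ∉ insert i A :=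
  fun h => (Finset.mem_insert.mp h).elim hij hj

/-- The generator `x_{A,i}` inside the free algebra. -/
def fgen (F : Type*) [Field F] (n : ℕ) (A : Finset (Fin n)) (i : Fin n) (h : i ∉ A) :
    FreeAlgebra F (QGen n) :=
  FreeAlgebra.ι F ⟨(A, i), h⟩

/-- The defining relations of `Qₙ`:
`x_{A∪{i},j} + x_{A,i} = x_{A∪{j},i} + x_{A,j}` and
`x_{A∪{i},j} · x_{A,i} = x_{A∪{j},i} · x_{A,j}`. -/
inductive QRel (F : Type*) [Field F] (n : ℕ) :
    FreeAlgebra F (QGen n) → FreeAlgebra F (QGen n) → Prop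
  | add (A : Finset (Fin n)) (i j : Fin n) (hi : i ∉ A) (hj : j ∉ A) (hij : i ≠ j) :
      QRel F n (fgen F n (insert i A) j (notmem_insert hj (Ne.symm hij)) + fgen F n A i hi)
        (fgen F n (insert j A) i (notmem_insert hi hij) + fgen F n A j hj)
  | mul (A : Finset (Fin n)) (i j : Fin n) (hi : i ∉ A) (hj : j ∉ A) (hij : i ≠ j) :
      QRel F n (fgen F n (insert i A) j (notmem_insert hj (Ne.symm hij)) * fgen F n A i hi)
        (fgen F n (insert j A) i (notmem_insert hi hij) * fgen F n A j hj)

/-- The universal algebra of pseudo-roots `Qₙ`. -/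
def Q (F : Type*) [Field F] (n : ℕ) : Type _ := RingQuot (QRel F n)

noncomputable instance (F : Type*) [Field F] (n : ℕ) : Ring (Q F n) :=
  inferInstanceAs (Ring (RingQuot (QRel F n)))

noncomputable instance (F : Type*) [Field F] (n : ℕ) : Algebra F (Q F n) :=
  inferInstanceAs (Algebra F (RingQuot (QRel F n)))

/-- The pseudo-root `x_{A,i}` in `Qₙ`. -/
noncomputable def xgen (F : Type*) [Field F] (n : ℕ) (A : Finset (Fin n)) (i : Fin n)
    (h : i ∉ A) : Q F n :=
  RingQuot.mkAlgHom F (QRel F n) (fgen F n A i h)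

theorem sigma_notmem {n : ℕ} (σ : Equiv.Perm (Fin n)) (k : Fin n) :
    σ k ∉ (Finset.Iio k).image σ := by
  simp only [Finset.mem_image, Finset.mem_Iio, not_exists, not_and]
  intro a ha h
  exact absurd (σ.injective h) (ne_of_lt ha)

/-- The polynomial `𝒫(t) = (t − x_{Aₙ,iₙ})⋯(t − x_{A₁,i₁})` associated to the ordering
`(σ 0, σ 1, …, σ (n-1))` of `{1,…,n}`, where `A_k = {σ 0, …, σ (k-1)}`. -/
noncomputable def calPolyOrd (F : Type*) [Field F] (n : ℕ) (σ : Equiv.Perm (Fin n)) :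
    Polynomial (Q F n) :=
  ((List.finRange n).reverse.map (fun k =>
    Polynomial.X - Polynomial.C
      (xgen F n ((Finset.Iio k).image σ) (σ k) (sigma_notmem σ k)))).prod

/-- The canonical polynomial `𝒫(t) ∈ Qₙ[t]` (defined via the standard ordering). -/
noncomputable def calPoly (F : Type*) [Field F] (n : ℕ) : Polynomial (Q F n) :=
  calPolyOrd F n 1

/-- The `du`-envelope of a set `Z ⊆ Qₙ`: the smallest set containing `Z` and closed
under `d`- and `u`-operations on pairs of pseudo-roots. -/
inductive DuEnv (F : Type*) [Field F] (n : ℕ) (Z : Set (Q F n)) : Q F n → Prop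
  | base {z : Q F n} : z ∈ Z → DuEnv F n Z z
  | u {A : Finset (Fin n)} {i j : Fin n} (hi : i ∉ A) (hj : j ∉ A) (ξ : Q F n) :
      DuEnv F n Z (xgen F n A i hi) → DuEnv F n Z (xgen F n A j hj) →
      (xgen F n A i hi - xgen F n A j hj) * xgen F n A i hi =
        ξ * (xgen F n A i hi - xgen F n A j hj) →
      DuEnv F n Z ξ
  | d {A B : Finset (Fin n)} {i j : Fin n} (hi : i ∉ A) (hj : j ∉ B) (η : Q F n) :
      insert i A = insert j B →
      DuEnv F n Z (xgen F n A i hi) → DuEnv F n Z (xgen F n B j hj) →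
      (xgen F n A i hi - xgen F n B j hj) * η =
        xgen F n A i hi * (xgen F n A i hi - xgen F n B j hj) →
      DuEnv F n Z η

/-- A set `Y ⊆ Qₙ` is a defining set of pseudo-roots of `𝒫(t)` if
`𝒫(t) = (t − yₙ)(t − y_{n-1})⋯(t − y₁)` with all `y_k ∈ Y`. -/
def Defining (F : Type*) [Field F] (n : ℕ) (Y : Set (Q F n)) : Prop :=
  ∃ y : Fin n → Q F n, (∀ k, y k ∈ Y) ∧
    calPoly F n =
      ((List.finRange n).reverse.map (fun k => Polynomial.X - Polynomial.C (y k))).prod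

/-- A set `Z ⊆ Qₙ` is sufficient if its `du`-envelope contains a defining set of
pseudo-roots of `𝒫(t)`. -/
def Sufficient (F : Type*) [Field F] (n : ℕ) (Z : Set (Q F n)) : Prop :=
  ∃ Y : Set (Q F n), (∀ q ∈ Y, DuEnv F n Z q) ∧ Defining F n Y

section Aux

variable {F : Type*} [Field F] {n : ℕ}

lemma xgen_proof_irrel (A : Finset (Fin n)) (i : Fin n) (h h' : i ∉ A) :
    xgen F n A i h = xgen F n A i h' := rfl

lemma xadd (A : Finset (Fin n)) (i j : Fin n) (hi : i ∉ A) (hj : j ∉ A) (hij : i ≠ j) :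
    xgen F n (insert i A) j (notmem_insert hj hij.symm) + xgen F n A i hi =
      xgen F n (insert j A) i (notmem_insert hi hij) + xgen F n A j hj := by
  have hr : QRel F n (fgen F n (insert i A) j (notmem_insert hj hij.symm) + fgen F n A i hi)
      (fgen F n (insert j A) i (notmem_insert hi hij) + fgen F n A j hj) :=
    QRel.add A i j hi hj hij
  have h := RingQuot.mkAlgHom_rel F hr
  simp only [map_add] at h
  exact h

lemma xmul (A : Finset (Fin n)) (i j : Fin n) (hi : i ∉ A) (hj : j ∉ A) (hij : i ≠ j) :
    xgen F n (insert i A) j (notmem_insert hj hij.symm) * xgen F n A i hi =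
      xgen F n (insert j A) i (notmem_insert hi hij) * xgen F n A j hj := by
  have hr : QRel F n (fgen F n (insert i A) j (notmem_insert hj hij.symm) * fgen F n A i hi)
      (fgen F n (insert j A) i (notmem_insert hi hij) * fgen F n A j hj) :=
    QRel.mul A i j hi hj hij
  have h := RingQuot.mkAlgHom_rel F hr
  simp only [map_mul] at h
  exact h

lemma xsub (A : Finset (Fin n)) (i j : Fin n) (hi : i ∉ A) (hj : j ∉ A) (hij : i ≠ j) :
    xgen F n (insert j A) i (notmem_insert hi hij) -
      xgen F n (insert i A) j (notmem_insert hj hij.symm) =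
      xgen F n A i hi - xgen F n A j hj := by
  rw [sub_eq_sub_iff_add_eq_add]
  exact (xadd A i j hi hj hij).symm.trans (add_comm _ _)

/-- The key identity: `x_{A∪{j},i}·(x_{A,i} − x_{A,j}) = (x_{A,i} − x_{A,j})·x_{A,i}`. -/
lemma key (A : Finset (Fin n)) (i j : Fin n) (hi : i ∉ A) (hj : j ∉ A) (hij : i ≠ j) :
    xgen F n (insert j A) i (notmem_insert hi hij) * (xgen F n A i hi - xgen F n A j hj) =
      (xgen F n A i hi - xgen F n A j hj) * xgen F n A i hi := by
  have h1 := xmul (F := F) A i j hi hj hij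
  have h2 := xsub (F := F) A i j hi hj hij
  calc xgen F n (insert j A) i (notmem_insert hi hij) * (xgen F n A i hi - xgen F n A j hj)
      = xgen F n (insert j A) i (notmem_insert hi hij) * xgen F n A i hi -
        xgen F n (insert i A) j (notmem_insert hj hij.symm) * xgen F n A i hi := by
        rw [mul_sub, ← h1]
    _ = (xgen F n (insert j A) i (notmem_insert hi hij) -
        xgen F n (insert i A) j (notmem_insert hj hij.symm)) * xgen F n A i hi :=
        (sub_mul _ _ _).symm
    _ = (xgen F n A i hi - xgen F n A j hj) * xgen F n A i hi := by rw [h2]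

/-- Every generator lies in the du-envelope of `{x_{∅,k}}`. -/
lemma env1 (A : Finset (Fin n)) :
    ∀ (i : Fin n) (hi : i ∉ A),
      DuEnv F n {q | ∃ k : Fin n, q = xgen F n ∅ k (Finset.notMem_empty k)}
        (xgen F n A i hi) := by
  induction A using Finset.induction_on with
  | empty => intro i hi; exact DuEnv.base ⟨i, rfl⟩
  | @insert j B hj ih =>
    intro i hi
    have hiB : i ∉ B := fun h => hi (Finset.mem_insert_of_mem h)
    have hij : i ≠ j := fun h => hi (h ▸ Finset.mem_insert_self j B)
    exact DuEnv.u hiB hj (xgen F n (insert j B) i hi) (ih i hiB) (ih j hj)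
      (key B i j hiB hj hij).symm

/-- Every generator lies in the du-envelope of `{x_{univ∖{k},k}}`. -/
lemma env2 : ∀ (s : ℕ) (A : Finset (Fin n)) (i : Fin n) (hi : i ∉ A),
    A.card + s + 1 = n →
      DuEnv F n
        {q | ∃ k : Fin n, q = xgen F n (Finset.univ.erase k) k (Finset.notMem_erase k _)}
        (xgen F n A i hi) := by
  intro s
  induction s with
  | zero =>
    intro A i hi hcard
    have hsub : A ⊆ Finset.univ.erase i := fun a ha =>
      Finset.mem_erase.mpr ⟨fun h => hi (h ▸ ha), Finset.mem_univ a⟩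
    have hc : (Finset.univ.erase i).card ≤ A.card := by
      rw [Finset.card_erase_of_mem (Finset.mem_univ i), Finset.card_univ, Fintype.card_fin]
      omega
    have hA : A = Finset.univ.erase i := Finset.eq_of_subset_of_card_le hsub hc
    subst hA
    exact DuEnv.base ⟨i, rfl⟩
  | succ s ih =>
    intro A i hi hcard
    have hlt : (insert i A).card < n := by
      rw [Finset.card_insert_of_notMem hi]; omega
    have hne : insert i A ≠ Finset.univ := fun h => by
      rw [h, Finset.card_univ, Fintype.card_fin] at hlt; omega
    obtain ⟨j, hj⟩ : ∃ j, j ∉ insert i A := by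
      by_contra h
      push_neg at h
      exact hne (Finset.eq_univ_iff_forall.mpr h)
    have hjA : j ∉ A := fun h => hj (Finset.mem_insert_of_mem h)
    have hji : j ≠ i := fun h => hj (h ▸ Finset.mem_insert_self i A)
    have hij : i ≠ j := hji.symm
    have hcomm : insert i (insert j A) = insert j (insert i A) := Finset.insert_comm i j A
    refine DuEnv.d (notmem_insert hi hij) (notmem_insert hjA hji) (xgen F n A i hi) hcomm
      (ih (insert j A) i (notmem_insert hi hij)
        (by rw [Finset.card_insert_of_notMem hjA]; omega))
      (ih (insert i A) j (notmem_insert hjA hji)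
        (by rw [Finset.card_insert_of_notMem hi]; omega)) ?_
    rw [xsub A i j hi hjA hij]
    exact (key A i j hi hjA hij).symm

end Aux

/-- The sets `{x_{∅,k} : k}` and `{x_{{1,…,n}∖{k},k} : k}` are sufficient in `Qₙ` for `𝒫(t)`. -/
theorem stmt7 (F : Type*) [Field F] (n : ℕ) :
    Sufficient F n {q | ∃ k : Fin n, q = xgen F n ∅ k (Finset.notMem_empty k)} ∧
    Sufficient F n
      {q | ∃ k : Fin n, q = xgen F n (Finset.univ.erase k) k (Finset.notMem_erase k _)} := by
  set y : Fin n → Q F n := fun k =>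
    xgen F n ((Finset.Iio k).image (1 : Equiv.Perm (Fin n))) ((1 : Equiv.Perm (Fin n)) k)
      (sigma_notmem 1 k) with hy
  have hdef : Defining F n (Set.range y) := ⟨y, fun k => Set.mem_range_self k, rfl⟩
  have hcard : ∀ k : Fin n, ((Finset.Iio k).image (1 : Equiv.Perm (Fin n))).card = (k : ℕ) := by
    intro k
    rw [Finset.card_image_of_injective _ (Equiv.injective _)]
    simp [Fin.card_Iio]
  constructor
  · refine ⟨Set.range y, ?_, hdef⟩
    rintro q ⟨k, rfl⟩
    exact env1 _ _ _
  · refine ⟨Set.range y, ?_, hdef⟩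
    rintro q ⟨k, rfl⟩
    exact env2 (n - 1 - (k : ℕ)) _ _ _ (by have := k.isLt; rw [hcard k]; omega)
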